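/- In the Grigorchuk group G, for a fixed boundary ray e, the parabolic subgroup P = Stab_G(e) equals the intersection ⋂_{n∈ℕ} P_n, where P_n = Stab_G(e_1...e_n); each P_n has index 2^n in G, and P has infinite index in G. -/

import Mathlib

/-- The rooted automorphism `a` of the binary tree: it flips the first letter. -/
def gaFun : List Bool → List Bool
  | [] => []
  | s :: t => (!s) :: t

mutual
  /-- The generator `b` of the Grigorchuk group: `φ(b) = (a, c)`. -/
  def gbFun : List Bool → List Bool
    | [] => []
    | false :: t => false :: gaFun t
    | true :: t => true :: gcFun t
  /-- The generator `c` of the Grigorchuk group: `φ(c) = (a, d)`. -/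
  def gcFun : List Bool → List Bool
    | [] => []
    | false :: t => false :: gaFun t
    | true :: t => true :: gdFun t
  /-- The generator `d` of the Grigorchuk group: `φ(d) = (1, b)`. -/
  def gdFun : List Bool → List Bool
    | [] => []
    | false :: t => false :: t
    | true :: t => true :: gbFun t
end

theorem gaFun_involutive : Function.Involutive gaFun := by
  intro t
  cases t with
  | nil => rfl
  | cons s r => cases s <;> rfl

theorem gbcd_involutive :
    ∀ t : List Bool, gbFun (gbFun t) = t ∧ gcFun (gcFun t) = t ∧ gdFun (gdFun t) = t := by
  intro t
  induction t with
  | nil => exact ⟨rfl, rfl, rfl⟩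
  | cons s r ih =>
    cases s <;>
      simp [gbFun, gcFun, gdFun, gaFun_involutive r, ih.1, ih.2.1, ih.2.2]

/-- The generator `a` as a tree automorphism. -/
def ga : Equiv.Perm (List Bool) := Function.Involutive.toPerm gaFun gaFun_involutive

/-- The generator `b` as a tree automorphism. -/
def gb : Equiv.Perm (List Bool) := Function.Involutive.toPerm gbFun fun t => (gbcd_involutive t).1

/-- The generator `c` as a tree automorphism. -/
def gc : Equiv.Perm (List Bool) := Function.Involutive.toPerm gcFun fun t => (gbcd_involutive t).2.1

/-- The generator `d` as a tree automorphism. -/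
def gd : Equiv.Perm (List Bool) := Function.Involutive.toPerm gdFun fun t => (gbcd_involutive t).2.2

/-- The Grigorchuk group, as the subgroup of `Aut(T₂)` generated by `a, b, c, d`. -/
def grig : Subgroup (Equiv.Perm (List Bool)) := Subgroup.closure {ga, gb, gc, gd}


/-- The stabilizer in the Grigorchuk group of the vertex `1^n`. -/
def grigP (n : ℕ) : Subgroup grig := MulAction.stabilizer grig (List.replicate n true)

/-- The parabolic subgroup of the Grigorchuk group: the stabilizer of the boundary
ray `e = 1^∞`, i.e. of every vertex `1^n`. -/
def grigParab : Subgroup grig where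
  carrier := {g | ∀ n : ℕ, g • List.replicate n true = List.replicate n true}
  one_mem' := fun n => one_smul _ _
  mul_mem' := fun {a b} ha hb n => by rw [mul_smul, hb n, ha n]
  inv_mem' := fun {a} ha n => by
    calc a⁻¹ • List.replicate n true = a⁻¹ • (a • List.replicate n true) := by rw [ha n]
    _ = List.replicate n true := inv_smul_smul a _

lemma Equiv.Perm.apply_inv_self' (x : Equiv.Perm (List Bool)) (l : List Bool) :
    x (x⁻¹ l) = l := (Equiv.eq_symm_apply x).mp rfl

lemma Equiv.Perm.inv_apply_self' (x : Equiv.Perm (List Bool)) (l : List Bool) :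
    x⁻¹ (x l) = l := Equiv.Perm.inv_eq_iff_eq.mpr rfl

lemma gabcd_length : ∀ t : List Bool, (gaFun t).length = t.length ∧
    (gbFun t).length = t.length ∧ (gcFun t).length = t.length ∧
    (gdFun t).length = t.length := by
  intro t
  induction t with
  | nil => exact ⟨rfl, rfl, rfl, rfl⟩
  | cons s r ih =>
    have ha : ∀ u : List Bool, (gaFun u).length = u.length := by
      intro u; cases u <;> rfl
    cases s <;> simp [gbFun, gcFun, gdFun, ha, ih.1, ih.2.1, ih.2.2]

lemma ga_mem : ga ∈ grig := Subgroup.subset_closure (by simp)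
lemma gb_mem : gb ∈ grig := Subgroup.subset_closure (by simp)
lemma gc_mem : gc ∈ grig := Subgroup.subset_closure (by simp)
lemma gd_mem : gd ∈ grig := Subgroup.subset_closure (by simp)

lemma grig_length {g : Equiv.Perm (List Bool)} (hg : g ∈ grig) :
    ∀ l : List Bool, (g l).length = l.length := by
  refine Subgroup.closure_induction (p := fun g _ => ∀ l : List Bool, (g l).length = l.length)
    ?_ (fun l => rfl) ?_ ?_ hg
  · rintro x (rfl | rfl | rfl | rfl) l <;>
      simp [ga, gb, gc, gd, Function.Involutive.toPerm, (gabcd_length l).1, (gabcd_length l).2.1,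
        (gabcd_length l).2.2.1, (gabcd_length l).2.2.2]
  · intro x y _ _ hx hy l
    rw [Equiv.Perm.mul_apply, hx, hy]
  · intro x _ hx l
    have := hx (x⁻¹ l)
    rw [Equiv.Perm.apply_inv_self'] at this; exact this.symm

lemma grig_section {g : Equiv.Perm (List Bool)} (hg : g ∈ grig) :
    ∃ h ∈ grig, ∀ t : List Bool, h (true :: t) = true :: g t := by
  have hone : ∃ h ∈ grig, ∀ t : List Bool,
      h (true :: t) = true :: (1 : Equiv.Perm (List Bool)) t :=
    ⟨1, one_mem grig, fun t => rfl⟩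
  refine Subgroup.closure_induction
    (p := fun g _ => ∃ h ∈ grig, ∀ t : List Bool, h (true :: t) = true :: g t)
    ?_ hone ?_ ?_ hg
  · rintro x (rfl | rfl | rfl | rfl)
    · exact ⟨ga * gb * ga, mul_mem (mul_mem ga_mem gb_mem) ga_mem,
        fun t => by simp [ga, gb, gaFun, gbFun, Function.Involutive.toPerm]⟩
    · exact ⟨gd, gd_mem, fun t => by simp [gd, gb, gdFun, Function.Involutive.toPerm]⟩
    · exact ⟨gb, gb_mem, fun t => by simp [gb, gc, gbFun, Function.Involutive.toPerm]⟩
    · exact ⟨gc, gc_mem, fun t => by simp [gc, gd, gcFun, Function.Involutive.toPerm]⟩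
  · rintro x y _ _ ⟨hx, hxm, hxe⟩ ⟨hy, hym, hye⟩
    exact ⟨hx * hy, mul_mem hxm hym, fun t => by
      rw [Equiv.Perm.mul_apply, hye, hxe, Equiv.Perm.mul_apply]⟩
  · rintro x _ ⟨h, hm, he⟩
    refine ⟨h⁻¹, inv_mem hm, fun t => ?_⟩
    have : h (true :: x⁻¹ t) = true :: t := by rw [he, Equiv.Perm.apply_inv_self']
    calc h⁻¹ (true :: t) = h⁻¹ (h (true :: x⁻¹ t)) := by rw [this]
      _ = true :: x⁻¹ t := Equiv.Perm.inv_apply_self' h _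

lemma grig_trans : ∀ (n : ℕ) (l : List Bool), l.length = n →
    ∃ g ∈ grig, g (List.replicate n true) = l := by
  intro n
  induction n with
  | zero =>
    intro l hl
    rw [List.length_eq_zero_iff] at hl
    exact ⟨1, one_mem _, by simp [hl]⟩
  | succ n ih =>
    intro l hl
    rcases l with _ | ⟨s, t⟩
    · simp at hl
    · obtain ⟨g, hg, hge⟩ := ih t (by simpa using hl)
      obtain ⟨h, hm, he⟩ := grig_section hg
      have key : h (List.replicate (n + 1) true) = true :: t := by
        rw [List.replicate_succ, he, hge]
      cases s
      · refine ⟨ga * h, mul_mem ga_mem hm, ?_⟩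
        rw [Equiv.Perm.mul_apply, key]
        simp [ga, gaFun]
      · exact ⟨h, hm, key⟩

lemma grig_orbit (n : ℕ) :
    MulAction.orbit grig (List.replicate n true) = {l : List Bool | l.length = n} := by
  ext l
  constructor
  · rintro ⟨⟨g, hg⟩, rfl⟩
    show ((g • List.replicate n true : List Bool)).length = n
    rw [Equiv.Perm.smul_def, grig_length hg]
    simp
  · intro hl
    obtain ⟨g, hg, hge⟩ := grig_trans n l hl
    exact ⟨⟨g, hg⟩, hge⟩

/-- In the Grigorchuk group `G`, the parabolic subgroup `P = Stab_G(1^∞)` is the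
intersection of the vertex stabilizers `P_n = Stab_G(1^n)`; each `P_n` has index `2^n`
in `G`, and `P` has infinite index in `G`. -/
theorem grigorchuk_parabolic_subgroup :
    grigParab = (⨅ n : ℕ, grigP n) ∧
      (∀ n : ℕ, (grigP n).index = 2 ^ n) ∧
      grigParab.index = 0 := by
  have hidx : ∀ n : ℕ, (grigP n).index = 2 ^ n := by
    intro n
    rw [grigP, MulAction.index_stabilizer, grig_orbit, ← Nat.card_coe_set_eq]
    have e : {l : List Bool | l.length = n} ≃ List.Vector Bool n :=
      Equiv.subtypeEquivRight fun l => Iff.rfl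
    rw [Nat.card_congr e, Nat.card_eq_fintype_card, card_vector]
    simp
  have hle : ∀ n : ℕ, grigParab ≤ grigP n := by
    intro n g hg
    exact hg n
  refine ⟨?_, hidx, ?_⟩
  · ext g
    simp only [Subgroup.mem_iInf]
    exact ⟨fun h n => h n, fun h n => h n⟩
  · by_contra h
    have hpos : 0 < grigParab.index := Nat.pos_of_ne_zero h
    have hdvd : 2 ^ grigParab.index ∣ grigParab.index := by
      rw [← hidx grigParab.index]
      exact Subgroup.index_dvd_of_le (hle _)
    have := Nat.le_of_dvd hpos hdvd
    exact absurd this (not_le.mpr (Nat.lt_two_pow_self))
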